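/- Suppose each S_{a^n} reproduces Π₀. Let r : [−1,1] → ℝ be C¹ and set R(t) = ∫_{−1}^{t} r(s) ds. Assume there exist α > 2 and μ > 0 such that for all n and all j = 1−n,…,L_n, a^{n,0}_j − a^{n,1}_j = r(j/n)·n^{−2} + ε^n_j with |ε^n_j| ≤ μ·n^{−α}, and assume ‖R‖₁ := ∫_{−1}^{1} |R(t)| dt < 1. Then limsup_{n→∞} ∑_{j=1−n}^{L_n} |q^{n,0}_j| ≤ ‖R‖₁, and consequently there exists n₀ ∈ ℕ such that ∑_{j=1−n}^{L_n} |q^{n,0}_j| < 1 for all n > n₀. Moreover, if α = 3, one may take n₀ = [√((‖r‖_∞ + 2(μ+‖r′‖_∞))² + 4(‖R‖₁−1)(μ+‖r′‖_∞)) + ‖r‖_∞ + 2(μ+‖r′‖_∞)] / (2(1−‖R‖₁)) when L_n = n−1, and n₀ = [√((‖r‖_∞ + 2(μ+‖r′‖_∞))² + 4(1−‖R‖₁)μ) + ‖r‖_∞ + 2(μ+‖r′‖_∞)] / (2(1−‖R‖₁)) when L_n = n, where ‖r‖_∞ = max_{t∈[−1,1]} |r(t)| and ‖r′‖_∞ =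 max_{t∈[−1,1]} |r′(t)|. -/

import Mathlib

/-- `‖q^{n,0}‖₁ = ∑_{j=1−n}^{L_n} |q^{n,0}_j|`, where
`q^{n,0}_j = ∑_{l=1−n}^{j} (a^{n,0}_l − a^{n,1}_l)`. -/
noncomputable def qsum0 (a0 a1 : ℤ → ℝ) (nn Ln : ℤ) : ℝ :=
  ∑ j ∈ Finset.Icc (1 - nn) Ln, |∑ l ∈ Finset.Icc (1 - nn) j, (a0 l - a1 l)|

open intervalIntegral MeasureTheory in
lemma lemA (f : ℝ → ℝ) (L a b : ℝ) (hab : a ≤ b)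
    (hf : ContinuousOn f (Set.Icc a b))
    (hlip : ∀ x ∈ Set.Icc a b, |f b - f x| ≤ L * (b - x)) :
    |f b * (b - a) - ∫ s in a..b, f s| ≤ L * (b - a) ^ 2 / 2 := by
  have hi : IntervalIntegrable f volume a b := hf.intervalIntegrable_of_Icc hab
  have h1 : f b * (b - a) - ∫ s in a..b, f s = ∫ s in a..b, (f b - f s) := by
    rw [intervalIntegral.integral_sub intervalIntegrable_const hi,
      intervalIntegral.integral_const]
    simp [smul_eq_mul]
    ring
  rw [h1]
  have hcont : Continuous (fun s : ℝ => L * (b - s)) := by continuity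
  calc |∫ s in a..b, (f b - f s)| ≤ ∫ s in a..b, |f b - f s| :=
        intervalIntegral.abs_integral_le_integral_abs hab
    _ ≤ ∫ s in a..b, L * (b - s) := by
        apply intervalIntegral.integral_mono_on hab
          ((intervalIntegrable_const.sub hi).abs) (hcont.intervalIntegrable a b)
        exact fun x hx => hlip x hx
    _ = L * (b - a) ^ 2 / 2 := by
        rw [intervalIntegral.integral_const_mul,
          intervalIntegral.integral_sub intervalIntegrable_const intervalIntegral.intervalIntegrable_id,
          intervalIntegral.integral_const, integral_id]
        simp [smul_eq_mul]
        ring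

lemma sum_Icc_int (F : ℤ → ℝ) (a : ℤ) (m : ℕ) :
    ∑ j ∈ Finset.Icc a (a + m - 1), F j = ∑ k ∈ Finset.range m, F (a + k) := by
  induction m with
  | zero => simp
  | succ m ih =>
    have h1 : (a + (m + 1 : ℕ) - 1 : ℤ) = (a + m - 1) + 1 := by push_cast; ring
    have h2 : Finset.Icc a ((a + m - 1) + 1) = insert ((a + m - 1) + 1) (Finset.Icc a (a + m - 1)) := by
      ext x; simp only [Finset.mem_Icc, Finset.mem_insert]; omega
    rw [h1, h2, Finset.sum_insert (by simp [Finset.mem_Icc]), ih, Finset.sum_range_succ]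
    have h3 : (a + m - 1) + 1 = a + (m : ℤ) := by ring
    rw [h3, add_comm]

lemma gauss_real (m : ℕ) : ∑ k ∈ Finset.range m, ((k : ℝ) + 1) = m * (m + 1) / 2 := by
  induction m with
  | zero => simp
  | succ m ih => rw [Finset.sum_range_succ, ih]; push_cast; ring

open intervalIntegral MeasureTheory in
lemma master (r : ℝ → ℝ)
    (hrc : ContinuousOn r (Set.Icc (-1:ℝ) 1))
    (Mr Mr' μ α : ℝ) (hMr0 : 0 ≤ Mr)
    (hMrb : ∀ t ∈ Set.Icc (-1:ℝ) 1, |r t| ≤ Mr)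
    (hlip : ∀ x ∈ Set.Icc (-1:ℝ) 1, ∀ y ∈ Set.Icc (-1:ℝ) 1, |r x - r y| ≤ Mr' * |x - y|)
    (R1 : ℝ) (hR1 : R1 = ∫ t in (-1:ℝ)..1, |∫ s in (-1:ℝ)..t, r s|)
    (a0 a1 : ℤ → ℝ) (n : ℕ) (hn : 1 ≤ n) (Ln : ℤ)
    (hLn1 : Ln ≤ (n:ℤ)) (hLn0 : (0:ℤ) ≤ Ln + n)
    (herr : ∀ j : ℤ, 1 - (n:ℤ) ≤ j → j ≤ Ln →
      |a0 j - a1 j - r ((j:ℝ)/n) / (n:ℝ)^2| ≤ μ / (n:ℝ)^α) :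
    qsum0 a0 a1 n Ln ≤ R1 + ((Ln:ℝ) + n) * Mr / (2*(n:ℝ)^2)
      + (((Ln:ℝ)+n) * ((Ln:ℝ)+n+1) / 2) * (μ/(n:ℝ)^α + Mr' / (2*(n:ℝ)^3)) := by
  have hn0 : (0:ℝ) < n := by exact_mod_cast hn
  have hnne : (n:ℝ) ≠ 0 := hn0.ne'
  set m : ℕ := (Ln + n).toNat with hmdef
  have hmz : (m : ℤ) = Ln + n := Int.toNat_of_nonneg hLn0
  have hmr : (m : ℝ) = (Ln:ℝ) + n := by exact_mod_cast congrArg (fun z : ℤ => (z : ℝ)) hmz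
  have hm2n : (m:ℤ) ≤ 2*n := by omega
  set a : ℕ → ℝ := fun k => ((k:ℝ) - n) / n with hadef
  have hmono : ∀ k : ℕ, a k ≤ a (k+1) := by
    intro k
    simp only [hadef]
    gcongr
    · push_cast; linarith
  have ha0 : a 0 = -1 := by
    simp only [hadef]
    rw [Nat.cast_zero, zero_sub, neg_div, div_self hnne]
  have hmem : ∀ k : ℕ, (k:ℤ) ≤ 2*n → a k ∈ Set.Icc (-1:ℝ) 1 := by
    intro k hk
    have hk' : (k:ℝ) ≤ 2*n := by exact_mod_cast hk
    have hk0 : (0:ℝ) ≤ k := Nat.cast_nonneg k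
    constructor
    · rw [hadef, le_div_iff₀ hn0]; linarith
    · rw [hadef, div_le_one hn0]; linarith
  have hsub : ∀ k : ℕ, (k:ℤ)+1 ≤ 2*n → Set.Icc (a k) (a (k+1)) ⊆ Set.Icc (-1:ℝ) 1 := by
    intro k hk
    exact Set.Icc_subset_Icc (hmem k (by omega)).1 (hmem (k+1) (by exact_mod_cast hk)).2
  have hlen : ∀ k : ℕ, a (k+1) - a k = 1/(n:ℝ) := by
    intro k
    simp only [hadef]
    push_cast
    field_simp
    ring
  set R : ℝ → ℝ := fun t => ∫ s in (-1:ℝ)..t, r s with hRdef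
  have hint : ∀ x ∈ Set.Icc (-1:ℝ) 1, ∀ y ∈ Set.Icc (-1:ℝ) 1,
      IntervalIntegrable r volume x y := by
    intro x hx y hy
    exact (hrc.mono (Set.uIcc_subset_Icc hx hy)).intervalIntegrable
  have hRlip : ∀ x ∈ Set.Icc (-1:ℝ) 1, ∀ y ∈ Set.Icc (-1:ℝ) 1, |R x - R y| ≤ Mr * |x - y| := by
    intro x hx y hy
    have hm1 : (-1:ℝ) ∈ Set.Icc (-1:ℝ) 1 := by constructor <;> norm_num
    have h1 : R x - R y = ∫ s in y..x, r s := by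
      simp only [hRdef]
      exact intervalIntegral.integral_interval_sub_left (hint _ hm1 _ hx) (hint _ hm1 _ hy)
    rw [h1]
    have h2 := intervalIntegral.norm_integral_le_of_norm_le_const (C := Mr)
      (a := y) (b := x) (f := r)
      (fun t ht => hMrb t (Set.uIcc_subset_Icc hy hx (Set.uIoc_subset_uIcc ht)))
    rw [Real.norm_eq_abs] at h2
    exact h2
  have hAlip : ∀ x ∈ Set.Icc (-1:ℝ) 1, ∀ y ∈ Set.Icc (-1:ℝ) 1,
      |(|R x| - |R y|)| ≤ Mr * |x - y| := by
    intro x hx y hy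
    exact (abs_abs_sub_abs_le_abs_sub _ _).trans (hRlip x hx y hy)
  have hAcont : ContinuousOn (fun t => |R t|) (Set.Icc (-1:ℝ) 1) := by
    have : LipschitzOnWith ⟨Mr, hMr0⟩ (fun t => |R t|) (Set.Icc (-1:ℝ) 1) :=
      LipschitzOnWith.of_dist_le_mul (fun x hx y hy => by
        rw [Real.dist_eq, Real.dist_eq]; exact hAlip x hx y hy)
    exact this.continuousOn
  set d : ℕ → ℝ := fun i => a0 (1 - (n:ℤ) + i) - a1 (1 - (n:ℤ) + i) with hddef
  set Q : ℕ → ℝ := fun k => ∑ i ∈ Finset.range (k+1), d i with hQdef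
  have houter : qsum0 a0 a1 n Ln = ∑ k ∈ Finset.range m, |Q k| := by
    rw [qsum0]
    have hIcc : Finset.Icc (1 - (n:ℤ)) Ln = Finset.Icc (1-(n:ℤ)) ((1-(n:ℤ)) + m - 1) := by
      congr 1; omega
    rw [hIcc, sum_Icc_int]
    refine Finset.sum_congr rfl (fun k hk => ?_)
    congr 1
    have h5 : (1 - (n:ℤ) + k) = (1-(n:ℤ)) + ((k+1 : ℕ) : ℤ) - 1 := by push_cast; ring
    rw [h5, sum_Icc_int]
  have hintk : ∀ k : ℕ, (k:ℤ) < 2*n → IntervalIntegrable r volume (a k) (a (k+1)) :=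
    fun k hk => hint _ (hmem k (by omega)) _ (hmem (k+1) (by push_cast; omega))
  have hdk : ∀ k : ℕ, k < m →
      |d k - (1/(n:ℝ)) * ∫ s in a k..a (k+1), r s| ≤ μ/(n:ℝ)^α + Mr' / (2*(n:ℝ)^3) := by
    intro k hk
    have hkz : (k:ℤ) < Ln + n := by omega
    have hj1 : (1 : ℤ) - n ≤ 1 - n + k := by omega
    have hj2 : (1 : ℤ) - n + k ≤ Ln := by omega
    have herr' := herr (1 - n + k) hj1 hj2
    have hcast : (((1 - (n:ℤ) + k : ℤ)):ℝ)/(n:ℝ) = a (k+1) := by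
      simp only [hadef]; congr 1; push_cast; ring
    have hIs : Set.Icc (a k) (a (k+1)) ⊆ Set.Icc (-1:ℝ) 1 := hsub k (by omega)
    have hA := lemA r Mr' (a k) (a (k+1)) (hmono k) (hrc.mono hIs)
      (fun x hx => by
        have h2 := hlip (a (k+1)) (hIs ⟨hmono k, le_refl _⟩) x (hIs hx)
        calc |r (a (k+1)) - r x| ≤ Mr' * |a (k+1) - x| := h2
        _ = Mr' * (a (k+1) - x) := by rw [abs_of_nonneg (by linarith [hx.2])])
    rw [hlen k] at hA
    have e1 : d k - (1/(n:ℝ)) * ∫ s in a k..a (k+1), r s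
        = (d k - r (a (k+1))/(n:ℝ)^2)
          + (1/(n:ℝ)) * (r (a (k+1)) * (1/(n:ℝ)) - ∫ s in a k..a (k+1), r s) := by
      field_simp; ring
    rw [e1]
    refine (abs_add_le _ _).trans ?_
    have t1 : |d k - r (a (k+1))/(n:ℝ)^2| ≤ μ/(n:ℝ)^α := by
      rw [← hcast]; exact herr'
    have t2 : |(1/(n:ℝ)) * (r (a (k+1)) * (1/(n:ℝ)) - ∫ s in a k..a (k+1), r s)|
        ≤ Mr' / (2*(n:ℝ)^3) := by
      rw [abs_mul, abs_of_nonneg (by positivity : (0:ℝ) ≤ 1/(n:ℝ))]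
      calc (1/(n:ℝ)) * |r (a (k+1)) * (1/(n:ℝ)) - ∫ s in a k..a (k+1), r s|
          ≤ (1/(n:ℝ)) * (Mr' * (1/(n:ℝ))^2 / 2) := by
            apply mul_le_mul_of_nonneg_left hA (by positivity)
        _ = Mr' / (2*(n:ℝ)^3) := by field_simp
    linarith
  have hQ : ∀ k, k < m → |Q k| ≤ (1/(n:ℝ)) * |R (a (k+1))|
      + ((k:ℝ)+1) * (μ/(n:ℝ)^α + Mr'/(2*(n:ℝ)^3)) := by
    intro k hk
    have hRsum : R (a (k+1)) = ∑ i ∈ Finset.range (k+1), ∫ s in a i..a (i+1), r s := by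
      rw [intervalIntegral.sum_integral_adjacent_intervals
        (fun i hi => hintk i (by omega)), ha0]
    have e2 : Q k - (1/(n:ℝ)) * R (a (k+1))
        = ∑ i ∈ Finset.range (k+1), (d i - (1/(n:ℝ)) * ∫ s in a i..a (i+1), r s) := by
      rw [hRsum, Finset.mul_sum, hQdef, ← Finset.sum_sub_distrib]
    have h3 : |Q k - (1/(n:ℝ)) * R (a (k+1))|
        ≤ ((k:ℝ)+1) * (μ/(n:ℝ)^α + Mr'/(2*(n:ℝ)^3)) := by
      rw [e2]
      refine (Finset.abs_sum_le_sum_abs _ _).trans ?_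
      have h4 := Finset.sum_le_sum (f := fun i => |d i - (1/(n:ℝ)) * ∫ s in a i..a (i+1), r s|)
        (g := fun _ => μ/(n:ℝ)^α + Mr'/(2*(n:ℝ)^3))
        (fun i hi => hdk i (lt_of_le_of_lt (Nat.lt_succ_iff.mp (Finset.mem_range.1 hi)) hk))
      refine h4.trans ?_
      rw [Finset.sum_const, Finset.card_range, nsmul_eq_mul]
      push_cast
      exact le_rfl
    have h5 : |Q k| ≤ |Q k - (1/(n:ℝ)) * R (a (k+1))| + |(1/(n:ℝ)) * R (a (k+1))| := by
      have := abs_add_le (Q k - (1/(n:ℝ)) * R (a (k+1))) ((1/(n:ℝ)) * R (a (k+1)))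
      simpa using this
    have h6 : |(1/(n:ℝ)) * R (a (k+1))| = (1/(n:ℝ)) * |R (a (k+1))| := by
      rw [abs_mul, abs_of_nonneg (by positivity : (0:ℝ) ≤ 1/(n:ℝ))]
    linarith
  have hCk : ∀ k, k < m → (1/(n:ℝ)) * |R (a (k+1))|
      ≤ (∫ s in a k..a (k+1), |R s|) + Mr * (1/(n:ℝ))^2/2 := by
    intro k hk
    have hIs : Set.Icc (a k) (a (k+1)) ⊆ Set.Icc (-1:ℝ) 1 := hsub k (by omega)
    have hA := lemA (fun t => |R t|) Mr (a k) (a (k+1)) (hmono k) (hAcont.mono hIs)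
      (fun x hx => by
        have h2 := hAlip (a (k+1)) (hIs ⟨hmono k, le_refl _⟩) x (hIs hx)
        calc |(|R (a (k+1))| - |R x|)| ≤ Mr * |a (k+1) - x| := h2
        _ = Mr * (a (k+1) - x) := by rw [abs_of_nonneg (by linarith [hx.2])])
    rw [hlen k] at hA
    have := (abs_le.1 hA).2
    linarith [this]
  have hintA : ∀ i : ℕ, i < m → IntervalIntegrable (fun t => |R t|) volume (a i) (a (i+1)) :=
    fun i hi => ((hAcont.mono (hsub i (by omega))).intervalIntegrable_of_Icc (hmono i))
  have hsum1 : ∑ k ∈ Finset.range m, (∫ s in a k..a (k+1), |R s|)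
      = ∫ s in (-1:ℝ)..(a m), |R s| := by
    rw [intervalIntegral.sum_integral_adjacent_intervals hintA, ha0]
  have hsum1b : (∫ s in (-1:ℝ)..(a m), |R s|) ≤ R1 := by
    rw [hR1]
    have hmm := hmem m hm2n
    have : (∫ s in (-1:ℝ)..(a m), |R s|) ≤ ∫ s in (-1:ℝ)..1, |R s| := by
      apply intervalIntegral.integral_mono_interval (le_refl (-1:ℝ)) hmm.1 hmm.2
      · exact Filter.Eventually.of_forall (fun x => abs_nonneg _)
      · exact (hAcont.intervalIntegrable_of_Icc (by norm_num))
    simpa [hRdef] using this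
  rw [houter]
  have step1 : ∑ k ∈ Finset.range m, |Q k|
      ≤ ∑ k ∈ Finset.range m, ((∫ s in a k..a (k+1), |R s|) + Mr * (1/(n:ℝ))^2/2
          + ((k:ℝ)+1) * (μ/(n:ℝ)^α + Mr'/(2*(n:ℝ)^3))) := by
    refine Finset.sum_le_sum (fun k hk => ?_)
    have hk' := Finset.mem_range.1 hk
    linarith [hQ k hk', hCk k hk']
  have step2 : ∑ k ∈ Finset.range m, ((∫ s in a k..a (k+1), |R s|) + Mr * (1/(n:ℝ))^2/2
          + ((k:ℝ)+1) * (μ/(n:ℝ)^α + Mr'/(2*(n:ℝ)^3)))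
      = (∫ s in (-1:ℝ)..(a m), |R s|) + m * (Mr * (1/(n:ℝ))^2/2)
          + ((m:ℝ)*(m+1)/2) * (μ/(n:ℝ)^α + Mr'/(2*(n:ℝ)^3)) := by
    rw [Finset.sum_add_distrib, Finset.sum_add_distrib, hsum1, Finset.sum_const,
      Finset.card_range, nsmul_eq_mul, ← Finset.sum_mul, gauss_real]
  have e3 : (m:ℝ) * (Mr * (1/(n:ℝ))^2/2) = ((Ln:ℝ)+n) * Mr / (2*(n:ℝ)^2) := by
    rw [hmr]; field_simp
  have e4 : ((m:ℝ)*(m+1)/2) = (((Ln:ℝ)+n) * ((Ln:ℝ)+n+1) / 2) := by rw [hmr]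
  calc ∑ k ∈ Finset.range m, |Q k| ≤ _ := step1
    _ = _ := step2
    _ ≤ R1 + ((Ln:ℝ) + n) * Mr / (2*(n:ℝ)^2)
      + (((Ln:ℝ)+n) * ((Ln:ℝ)+n+1) / 2) * (μ/(n:ℝ)^α + Mr' / (2*(n:ℝ)^3)) := by
        rw [e3, e4] at *
        linarith [hsum1b]

lemma quadlem (s B c x : ℝ) (hs : 0 < s)
    (hx : (Real.sqrt (B ^ 2 + 4 * s * c) + B) / (2 * s) < x) :
    B * x + c < s * x ^ 2 := by
  set D := B ^ 2 + 4 * s * c with hD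
  have h2 : Real.sqrt D + B < 2 * s * x := by
    rw [div_lt_iff₀ (by positivity)] at hx; linarith
  have h0 : 0 ≤ Real.sqrt D := Real.sqrt_nonneg D
  have h4 : D ≤ Real.sqrt D ^ 2 := by
    rcases le_or_gt 0 D with h | h
    · rw [Real.sq_sqrt h]
    · nlinarith
  nlinarith [sq_nonneg (Real.sqrt D)]

set_option maxHeartbeats 1600000 in
/-- for a family of subdivision schemes `S_{a^n}` reproducing `Π₀`
(with `L_n = n−1` for all `n`, or `L_n = n` for all `n`), a `C¹` function
`r : [−1,1] → ℝ` with `R(t) = ∫_{−1}^t r`, if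
`a^{n,0}_j − a^{n,1}_j = r(j/n) n^{−2} + ε^n_j` with `|ε^n_j| ≤ μ n^{−α}` (`α > 2`,
`μ > 0`) and `‖R‖₁ = ∫_{−1}^1 |R| < 1`, then
`limsup_n ∑_j |q^{n,0}_j| ≤ ‖R‖₁`, hence `∑_j |q^{n,0}_j| < 1` for all `n` beyond some
`n₀`; moreover if `α = 3` one may take `n₀` equal to the explicit formula (depending on
whether `L_n = n−1` or `L_n = n`), with `‖r‖_∞ = max_{[−1,1]} |r|`,
`‖r'‖_∞ = max_{[−1,1]} |r'|`. -/
theorem stmt15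
    (a0 a1 : ℕ → ℤ → ℝ) (L : ℕ → ℤ)
    (hL : (∀ n : ℕ, L n = (n : ℤ) - 1) ∨ (∀ n : ℕ, L n = (n : ℤ)))
    (hrep : ∀ n : ℕ, 1 ≤ n →
      (∑ l ∈ Finset.Icc (1 - (n : ℤ)) (L n), a0 n l) = 1 ∧
      (∑ l ∈ Finset.Icc (1 - (n : ℤ)) (L n + 1), a1 n l) = 1)
    (r r' : ℝ → ℝ)
    (hr' : ∀ t ∈ Set.Icc (-1 : ℝ) 1, HasDerivWithinAt r (r' t) (Set.Icc (-1 : ℝ) 1) t)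
    (hr'c : ContinuousOn r' (Set.Icc (-1 : ℝ) 1))
    (α μ : ℝ) (hα : 2 < α) (hμ : 0 < μ)
    (herr : ∀ n : ℕ, 1 ≤ n → ∀ j : ℤ, 1 - (n : ℤ) ≤ j → j ≤ L n →
      |a0 n j - a1 n j - r ((j : ℝ) / n) / (n : ℝ) ^ 2| ≤ μ / (n : ℝ) ^ α)
    (R1 : ℝ) (hR1 : R1 = ∫ t in (-1 : ℝ)..1, |∫ s in (-1 : ℝ)..t, r s|)
    (hRlt : R1 < 1)
    (Mr Mr' : ℝ)
    (hMr : Mr = ⨆ t : Set.Icc (-1 : ℝ) 1, |r (t : ℝ)|)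
    (hMr' : Mr' = ⨆ t : Set.Icc (-1 : ℝ) 1, |r' (t : ℝ)|) :
    (Filter.limsup (fun n : ℕ => qsum0 (a0 n) (a1 n) n (L n)) Filter.atTop ≤ R1) ∧
    (∃ n₀ : ℕ, ∀ n : ℕ, n₀ < n → qsum0 (a0 n) (a1 n) n (L n) < 1) ∧
    (α = 3 →
      ((∀ n : ℕ, L n = (n : ℤ) - 1) →
        ∀ n : ℕ,
          (Real.sqrt ((Mr + 2 * (μ + Mr')) ^ 2 + 4 * (R1 - 1) * (μ + Mr'))
              + Mr + 2 * (μ + Mr')) / (2 * (1 - R1)) < (n : ℝ) →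
          qsum0 (a0 n) (a1 n) n (L n) < 1) ∧
      ((∀ n : ℕ, L n = (n : ℤ)) →
        ∀ n : ℕ,
          (Real.sqrt ((Mr + 2 * (μ + Mr')) ^ 2 + 4 * (1 - R1) * μ)
              + Mr + 2 * (μ + Mr')) / (2 * (1 - R1)) < (n : ℝ) →
          qsum0 (a0 n) (a1 n) n (L n) < 1)) := by
  have hIccm : (-1:ℝ) ∈ Set.Icc (-1:ℝ) 1 := by constructor <;> norm_num
  have hrc : ContinuousOn r (Set.Icc (-1:ℝ) 1) := fun t ht => (hr' t ht).continuousWithinAt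
  have hbddr : BddAbove (Set.range fun t : Set.Icc (-1:ℝ) 1 => |r (t:ℝ)|) := by
    have h := (isCompact_Icc.image_of_continuousOn hrc.abs).bddAbove
    rw [Set.image_eq_range] at h
    exact h
  have hbddr' : BddAbove (Set.range fun t : Set.Icc (-1:ℝ) 1 => |r' (t:ℝ)|) := by
    have h := (isCompact_Icc.image_of_continuousOn hr'c.abs).bddAbove
    rw [Set.image_eq_range] at h
    exact h
  have hMrb : ∀ t ∈ Set.Icc (-1:ℝ) 1, |r t| ≤ Mr := by
    intro t ht
    rw [hMr]
    exact le_ciSup hbddr (⟨t, ht⟩ : Set.Icc (-1:ℝ) 1)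
  have hMr'b : ∀ t ∈ Set.Icc (-1:ℝ) 1, |r' t| ≤ Mr' := by
    intro t ht
    rw [hMr']
    exact le_ciSup hbddr' (⟨t, ht⟩ : Set.Icc (-1:ℝ) 1)
  have hMr0 : 0 ≤ Mr := le_trans (abs_nonneg _) (hMrb (-1) hIccm)
  have hMr'0 : 0 ≤ Mr' := le_trans (abs_nonneg _) (hMr'b (-1) hIccm)
  have hlip : ∀ x ∈ Set.Icc (-1:ℝ) 1, ∀ y ∈ Set.Icc (-1:ℝ) 1, |r x - r y| ≤ Mr' * |x - y| := by
    intro x hx y hy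
    have h := Convex.norm_image_sub_le_of_norm_hasDerivWithin_le hr'
      (fun t ht => by rw [Real.norm_eq_abs]; exact hMr'b t ht) (convex_Icc _ _) hy hx
    simpa [Real.norm_eq_abs] using h
  have hR10 : 0 ≤ R1 := by
    rw [hR1]
    exact intervalIntegral.integral_nonneg (by norm_num) (fun u _ => abs_nonneg _)
  have hqnn : ∀ n : ℕ, 0 ≤ qsum0 (a0 n) (a1 n) n (L n) := by
    intro n
    exact Finset.sum_nonneg (fun j _ => abs_nonneg _)
  have key : ∀ n : ℕ, 1 ≤ n → qsum0 (a0 n) (a1 n) n (L n) ≤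
      R1 + (((L n) : ℝ) + n) * Mr / (2*(n:ℝ)^2)
        + ((((L n):ℝ)+n) * (((L n):ℝ)+n+1) / 2) * (μ/(n:ℝ)^α + Mr' / (2*(n:ℝ)^3)) := by
    intro n hn
    have hn' : (1:ℤ) ≤ n := by exact_mod_cast hn
    have hLn1 : L n ≤ (n:ℤ) := by rcases hL with h | h <;> rw [h n] <;> omega
    have hLn0 : (0:ℤ) ≤ L n + n := by rcases hL with h | h <;> rw [h n] <;> omega
    exact master r hrc Mr Mr' μ α hMr0 hMrb hlip R1 hR1 (a0 n) (a1 n) n hn (L n) hLn1 hLn0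
      (herr n hn)
  -- uniform vanishing bound
  set g : ℕ → ℝ := fun n => (Mr + 2*Mr') * (1/(n:ℝ)) + (3*μ) * (n:ℝ)^((2:ℝ)-α) with hgdef
  have hg : ∀ n : ℕ, 1 ≤ n → qsum0 (a0 n) (a1 n) n (L n) ≤ R1 + g n := by
    intro n hn
    have hn0 : (0:ℝ) < n := by exact_mod_cast hn
    have hn1 : (1:ℝ) ≤ n := by exact_mod_cast hn
    have hLn1 : L n ≤ (n:ℤ) := by rcases hL with h | h <;> rw [h n] <;> omega
    have hLn0 : (0:ℤ) ≤ L n + n := by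
      have hn' : (1:ℤ) ≤ n := by exact_mod_cast hn
      rcases hL with h | h <;> rw [h n] <;> omega
    have hx2 : ((L n : ℤ):ℝ) + n ≤ 2*n := by
      have : ((L n : ℤ):ℝ) ≤ n := by exact_mod_cast hLn1
      linarith
    have hx0 : 0 ≤ ((L n : ℤ):ℝ) + n := by exact_mod_cast hLn0
    have hP : 0 ≤ μ/(n:ℝ)^α := le_of_lt (div_pos hμ (Real.rpow_pos_of_pos hn0 α))
    have hrp : 3*(n:ℝ)^2 * (μ/(n:ℝ)^α) = (3*μ) * (n:ℝ)^((2:ℝ)-α) := by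
      rw [Real.rpow_sub hn0]
      rw [show ((n:ℝ))^((2:ℝ)) = (n:ℝ)^(2:ℕ) by
        rw [show (2:ℝ) = ((2:ℕ):ℝ) by norm_num, Real.rpow_natCast]]
      simp only [div_eq_mul_inv]
      ring
    have hfr : 3*(n:ℝ)^2 * (Mr'/(2*(n:ℝ)^3)) ≤ (2*Mr') * (1/(n:ℝ)) := by
      have e : 3*(n:ℝ)^2 * (Mr'/(2*(n:ℝ)^3)) = (3/2) * (Mr' * (1/(n:ℝ))) := by
        field_simp
      have h0 : 0 ≤ Mr' * (1/(n:ℝ)) := mul_nonneg hMr'0 (by positivity)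
      rw [e]
      nlinarith [h0]
    have hfr2 : (((L n):ℝ)+n) * Mr / (2*(n:ℝ)^2) ≤ Mr * (1/(n:ℝ)) := by
      rw [div_le_iff₀ (by positivity : (0:ℝ) < 2*(n:ℝ)^2)]
      have h1 : Mr * (1/(n:ℝ)) * (2*(n:ℝ)^2) = 2*Mr*(n:ℝ) := by
        field_simp
      rw [h1]
      nlinarith [mul_nonneg hMr0 (sub_nonneg.2 hx2)]
    have hcoef : ((((L n):ℝ)+n) * (((L n):ℝ)+n+1) / 2) ≤ 3*(n:ℝ)^2 := by nlinarith
    have hGpos : 0 ≤ μ/(n:ℝ)^α + Mr' / (2*(n:ℝ)^3) := by positivity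
    have h2 : ((((L n):ℝ)+n) * (((L n):ℝ)+n+1) / 2) * (μ/(n:ℝ)^α + Mr' / (2*(n:ℝ)^3))
        ≤ 3*(n:ℝ)^2 * (μ/(n:ℝ)^α) + 3*(n:ℝ)^2 * (Mr'/(2*(n:ℝ)^3)) := by
      have := mul_le_mul_of_nonneg_right hcoef hGpos
      linarith [this]
    have hk := key n hn
    rw [hgdef]
    simp only
    linarith [hk, h2, hrp ▸ le_refl (3*(n:ℝ)^2 * (μ/(n:ℝ)^α)), hfr, hfr2,
      hrp.le, hrp.ge]
  have hgt : Filter.Tendsto g Filter.atTop (nhds 0) := by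
    have h1 : Filter.Tendsto (fun n:ℕ => 1/(n:ℝ)) Filter.atTop (nhds 0) :=
      tendsto_one_div_atTop_nhds_zero_nat
    have h2 : Filter.Tendsto (fun n:ℕ => (n:ℝ)^((2:ℝ)-α)) Filter.atTop (nhds 0) := by
      have h3 : Filter.Tendsto (fun x:ℝ => x^(-(α-(2:ℝ)))) Filter.atTop (nhds 0) :=
        tendsto_rpow_neg_atTop (by linarith)
      have h4 := h3.comp (tendsto_natCast_atTop_atTop (R := ℝ))
      simp only [show (2:ℝ)-α = -(α-(2:ℝ)) from by ring]
      exact h4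
    have := (h1.const_mul (Mr + 2*Mr')).add (h2.const_mul (3*μ))
    simpa [hgdef, mul_comm] using this
  have hev : ∀ᶠ n in Filter.atTop, qsum0 (a0 n) (a1 n) n (L n) ≤ R1 + g n :=
    Filter.eventually_atTop.2 ⟨1, hg⟩
  have hb2 : Filter.Tendsto (fun n => R1 + g n) Filter.atTop (nhds R1) := by
    have := (tendsto_const_nhds (x := R1) (f := Filter.atTop (α := ℕ))).add hgt
    simpa using this
  refine ⟨?_, ?_, ?_⟩
  · calc Filter.limsup (fun n : ℕ => qsum0 (a0 n) (a1 n) n (L n)) Filter.atTop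
        ≤ Filter.limsup (fun n => R1 + g n) Filter.atTop := by
          refine Filter.limsup_le_limsup hev ?_ ?_
          · exact (Filter.isBoundedUnder_of_eventually_ge
              (Filter.Eventually.of_forall hqnn)).isCoboundedUnder_le
          · exact hb2.isBoundedUnder_le
      _ = R1 := hb2.limsup_eq
  · have h3 : ∀ᶠ n:ℕ in Filter.atTop, g n < 1 - R1 := hgt.eventually_lt_const (by linarith)
    have h4 : ∀ᶠ n:ℕ in Filter.atTop, qsum0 (a0 n) (a1 n) n (L n) < 1 := by
      filter_upwards [hev, h3] with n h5 h6
      linarith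
    obtain ⟨N, hN⟩ := Filter.eventually_atTop.1 h4
    exact ⟨N, fun n hn => hN n hn.le⟩
  · intro hα3
    subst hα3
    have hs : (0:ℝ) < 1 - R1 := by linarith
    constructor
    · intro hL' n hn
      have hnum : 0 ≤ Real.sqrt ((Mr + 2 * (μ + Mr')) ^ 2 + 4 * (R1 - 1) * (μ + Mr'))
          + Mr + 2 * (μ + Mr') := by
        have := Real.sqrt_nonneg ((Mr + 2 * (μ + Mr')) ^ 2 + 4 * (R1 - 1) * (μ + Mr'))
        linarith
      have hn0 : (0:ℝ) < n := lt_of_le_of_lt (div_nonneg hnum (by linarith)) hn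
      have hn1 : 1 ≤ n := by
        have : (0:ℕ) < n := by exact_mod_cast hn0
        omega
      have hn1' : (1:ℝ) ≤ n := by exact_mod_cast hn1
      -- quadratic
      have hx' : (Real.sqrt ((Mr + 2*(μ+Mr'))^2 + 4*(1-R1)*(-(μ+Mr'))) + (Mr + 2*(μ+Mr')))
          / (2*(1-R1)) < (n:ℝ) := by
        rw [show (Mr + 2*(μ+Mr'))^2 + 4*(1-R1)*(-(μ+Mr'))
          = (Mr + 2 * (μ + Mr')) ^ 2 + 4 * (R1 - 1) * (μ + Mr') by ring]
        rw [show Real.sqrt ((Mr + 2 * (μ + Mr')) ^ 2 + 4 * (R1 - 1) * (μ + Mr'))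
            + (Mr + 2 * (μ + Mr'))
          = Real.sqrt ((Mr + 2 * (μ + Mr')) ^ 2 + 4 * (R1 - 1) * (μ + Mr'))
            + Mr + 2 * (μ + Mr') by ring]
        exact hn
      have hq := quadlem (1-R1) (Mr + 2*(μ+Mr')) (-(μ+Mr')) (n:ℝ) hs hx'
      have hk := key n hn1
      rw [hL' n] at hk ⊢
      push_cast at hk
      have hpow3 : ((n:ℝ))^((3:ℝ)) = (n:ℝ)^(3:ℕ) := by
        rw [show (3:ℝ) = ((3:ℕ):ℝ) by norm_num, Real.rpow_natCast]
      rw [hpow3] at hk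
      have ht0 : (0:ℝ) < (n:ℝ) := hn0
      have hk2 : qsum0 (a0 n) (a1 n) (↑n) ((n:ℤ)-1)
          ≤ R1 + ((2*(n:ℝ)-1)*Mr*(n:ℝ) + (2*(n:ℝ)-1)*(n:ℝ)*(2*μ + Mr'))/(2*(n:ℝ)^3) := by
        refine le_trans hk (le_of_eq ?_)
        push_cast
        field_simp
        ring
      refine lt_of_le_of_lt hk2 ?_
      have hq2 := mul_lt_mul_of_pos_left hq (show (0:ℝ) < 2*(n:ℝ) by positivity)
      have h3 : 0 ≤ (n:ℝ)*(2*Mr'*(n:ℝ) + Mr - Mr') := by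
        have hin : 0 ≤ 2*Mr'*(n:ℝ) + Mr - Mr' := by
          nlinarith [mul_nonneg hMr'0 (by linarith : (0:ℝ) ≤ 2*(n:ℝ)-1)]
        exact mul_nonneg ht0.le hin
      have hfin : ((2*(n:ℝ)-1)*Mr*(n:ℝ) + (2*(n:ℝ)-1)*(n:ℝ)*(2*μ + Mr'))/(2*(n:ℝ)^3)
          < 1 - R1 := by
        rw [div_lt_iff₀ (by positivity : (0:ℝ) < 2*(n:ℝ)^3)]
        nlinarith [hq2, h3]
      linarith
    · intro hL' n hn
      have hnum : 0 ≤ Real.sqrt ((Mr + 2 * (μ + Mr')) ^ 2 + 4 * (1 - R1) * μ)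
          + Mr + 2 * (μ + Mr') := by
        have := Real.sqrt_nonneg ((Mr + 2 * (μ + Mr')) ^ 2 + 4 * (1 - R1) * μ)
        linarith
      have hn0 : (0:ℝ) < n := lt_of_le_of_lt (div_nonneg hnum (by linarith)) hn
      have hn1 : 1 ≤ n := by
        have : (0:ℕ) < n := by exact_mod_cast hn0
        omega
      have hn1' : (1:ℝ) ≤ n := by exact_mod_cast hn1
      have hx' : (Real.sqrt ((Mr + 2*(μ+Mr'))^2 + 4*(1-R1)*μ) + (Mr + 2*(μ+Mr')))
          / (2*(1-R1)) < (n:ℝ) := by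
        rw [show Real.sqrt ((Mr + 2 * (μ + Mr')) ^ 2 + 4 * (1 - R1) * μ)
            + (Mr + 2 * (μ + Mr'))
          = Real.sqrt ((Mr + 2 * (μ + Mr')) ^ 2 + 4 * (1 - R1) * μ)
            + Mr + 2 * (μ + Mr') by ring]
        exact hn
      have hq := quadlem (1-R1) (Mr + 2*(μ+Mr')) μ (n:ℝ) hs hx'
      have hk := key n hn1
      rw [hL' n] at hk ⊢
      push_cast at hk
      have hpow3 : ((n:ℝ))^((3:ℝ)) = (n:ℝ)^(3:ℕ) := by
        rw [show (3:ℝ) = ((3:ℕ):ℝ) by norm_num, Real.rpow_natCast]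
      rw [hpow3] at hk
      have ht0 : (0:ℝ) < (n:ℝ) := hn0
      have hk2 : qsum0 (a0 n) (a1 n) (↑n) (n:ℤ)
          ≤ R1 + (2*Mr*(n:ℝ)^2 + (n:ℝ)*(2*(n:ℝ)+1)*(2*μ + Mr'))/(2*(n:ℝ)^3) := by
        refine le_trans hk (le_of_eq ?_)
        push_cast
        field_simp
        ring
      refine lt_of_le_of_lt hk2 ?_
      have hq2 := mul_lt_mul_of_pos_left hq (show (0:ℝ) < 2*(n:ℝ) by positivity)
      have h3 : 0 ≤ Mr'*(n:ℝ)*(2*(n:ℝ)-1) := by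
        apply mul_nonneg (mul_nonneg hMr'0 ht0.le)
        linarith
      have hfin : (2*Mr*(n:ℝ)^2 + (n:ℝ)*(2*(n:ℝ)+1)*(2*μ + Mr'))/(2*(n:ℝ)^3)
          < 1 - R1 := by
        rw [div_lt_iff₀ (by positivity : (0:ℝ) < 2*(n:ℝ)^3)]
        nlinarith [hq2, h3]
      linarith
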